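/- arXiv:2404.04236 — 3 statements merged into one kernel-verified Lean document; each statement's English description precedes it below -/
import Mathlib

section
/- Let Q ∈ ℝ^{n×n} be symmetric positive definite, and let S ⊆ T ⊆ [n]. Then (Q ∘ e_T e_T⊤)† ⪰ (Q ∘ e_S e_S⊤)† in the Loewner order, where M† denotes the Moore–Penrose pseudoinverse and e_S is the 0/1 indicator vector of S. -/
open Matrix
open scoped Classical

/-- The Moore–Penrose pseudoinverse of a real square matrix, defined via its four
characterizing equations (and `0` if no such matrix exists; by uniqueness of the
Moore–Penrose pseudoinverse, when it exists this definition picks it out). -/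
noncomputable def pinv {m : Type*} [Fintype m] [DecidableEq m]
    (A : Matrix m m ℝ) : Matrix m m ℝ :=
  if h : ∃ B : Matrix m m ℝ,
      A * B * A = A ∧ B * A * B = B ∧ (A * B)ᵀ = A * B ∧ (B * A)ᵀ = B * A
  then h.choose else 0

/-- `Q ∘ e_S e_Sᵀ`: the matrix agreeing with `Q` on entries indexed by `S × S`,
and zero elsewhere. -/
def mask {n : ℕ} (Q : Matrix (Fin n) (Fin n) ℝ) (S : Finset (Fin n)) :
    Matrix (Fin n) (Fin n) ℝ :=
  Matrix.of fun i j => if i ∈ S ∧ j ∈ S then Q i j else 0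

namespace Stmt6Aux

variable {n : ℕ}

/-- uniqueness of the Moore-Penrose pseudoinverse -/
theorem mp_unique {m : Type*} [Fintype m] [DecidableEq m] {A B C : Matrix m m ℝ}
    (hB : A * B * A = A ∧ B * A * B = B ∧ (A * B)ᵀ = A * B ∧ (B * A)ᵀ = B * A)
    (hC : A * C * A = A ∧ C * A * C = C ∧ (A * C)ᵀ = A * C ∧ (C * A)ᵀ = C * A) :
    B = C := by
  obtain ⟨hB1, hB2, hB3, hB4⟩ := hB
  obtain ⟨hC1, hC2, hC3, hC4⟩ := hC
  have e1 : B = B * A * C := by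
    calc B = B * A * B := hB2.symm
    _ = B * (A * B)ᵀ := by rw [hB3]; rw [Matrix.mul_assoc]
    _ = B * (A * C * A * B)ᵀ := by rw [hC1]
    _ = B * ((A * B)ᵀ * (A * C)ᵀ) := by
        rw [← Matrix.transpose_mul]
        rw [Matrix.mul_assoc A C (A*B), ← Matrix.mul_assoc C A B, ← Matrix.mul_assoc A (C*A) B,
          ← Matrix.mul_assoc A C A]
    _ = B * (A * B * (A * C)) := by rw [hB3, hC3]
    _ = B * A * C := by
        rw [← Matrix.mul_assoc, ← Matrix.mul_assoc, ← Matrix.mul_assoc, hB2]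
  have e2 : C = B * A * C := by
    calc C = C * A * C := hC2.symm
    _ = (C * A)ᵀ * C := by rw [hC4]
    _ = (C * (A * B * A))ᵀ * C := by rw [hB1]
    _ = ((B * A)ᵀ * (C * A)ᵀ) * C := by
        rw [← Matrix.transpose_mul]
        rw [Matrix.mul_assoc C A (B*A), ← Matrix.mul_assoc A B A, ← Matrix.mul_assoc C (A*B) A]
    _ = (B * A) * (C * A) * C := by rw [hB4, hC4]
    _ = B * A * C := by
        rw [Matrix.mul_assoc (B*A) (C*A) C, Matrix.mul_assoc C A C, ← Matrix.mul_assoc C A C, hC2]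
  rw [e1, ← e2]

theorem pinv_eq {m : Type*} [Fintype m] [DecidableEq m] {A B : Matrix m m ℝ}
    (hB : A * B * A = A ∧ B * A * B = B ∧ (A * B)ᵀ = A * B ∧ (B * A)ᵀ = B * A) :
    pinv A = B := by
  rw [pinv, dif_pos ⟨B, hB⟩]
  exact mp_unique (Exists.choose_spec (⟨B, hB⟩ : ∃ B : Matrix m m ℝ,
      A * B * A = A ∧ B * A * B = B ∧ (A * B)ᵀ = A * B ∧ (B * A)ᵀ = B * A)) hB


theorem sum_subtype_eq (S : Finset (Fin n)) (F : Fin n → ℝ) (hF : ∀ k ∉ S, F k = 0) :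
    (∑ k, F k) = ∑ a : {i // i ∈ S}, F ↑a :=
  calc ∑ k, F k = ∑ k ∈ S, F k :=
        (Finset.sum_subset S.subset_univ (fun x _ hx => hF x hx)).symm
  _ = ∑ a : {i // i ∈ S}, F ↑a := (Finset.sum_coe_sort S F).symm

/-- diagonal 0/1 projection onto coordinates in `S` -/
def proj (S : Finset (Fin n)) : Matrix (Fin n) (Fin n) ℝ :=
  Matrix.of fun i j => if i = j ∧ i ∈ S then 1 else 0

def subQ (Q : Matrix (Fin n) (Fin n) ℝ) (S : Finset (Fin n)) :
    Matrix {i // i ∈ S} {i // i ∈ S} ℝ :=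
  Q.submatrix Subtype.val Subtype.val

noncomputable def Binv (Q : Matrix (Fin n) (Fin n) ℝ) (S : Finset (Fin n)) :
    Matrix (Fin n) (Fin n) ℝ :=
  Matrix.of fun i j =>
    if h : i ∈ S ∧ j ∈ S then (subQ Q S)⁻¹ ⟨i, h.1⟩ ⟨j, h.2⟩ else 0

variable {Q : Matrix (Fin n) (Fin n) ℝ} {S T : Finset (Fin n)}

theorem Q_symm (hQ : Q.PosDef) (i j : Fin n) : Q i j = Q j i := by
  have h := congrFun (congrFun hQ.isHermitian j) i
  simpa [conjTranspose_apply] using h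

theorem subQ_posDef (hQ : Q.PosDef) (S : Finset (Fin n)) : (subQ Q S).PosDef := by
  rw [posDef_iff_dotProduct_mulVec]
  constructor
  · ext a b
    simp only [subQ, conjTranspose_apply, submatrix_apply, star_trivial]
    exact Q_symm hQ b.1 a.1
  · intro x hx
    set y : Fin n → ℝ := fun j => if h : j ∈ S then x ⟨j, h⟩ else 0 with hy
    have hyval : ∀ a : {i // i ∈ S}, y ↑a = x a := fun a => by simp [hy, a.2]
    have hy0 : ∀ j ∉ S, y j = 0 := fun j hj => dif_neg hj
    have hyne : y ≠ 0 := by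
      obtain ⟨a, ha⟩ := Function.ne_iff.mp hx
      exact Function.ne_iff.mpr ⟨↑a, by rw [hyval]; simpa using ha⟩
    have h2 : ∀ a : {i // i ∈ S}, (Q *ᵥ y) ↑a = (subQ Q S *ᵥ x) a := by
      intro a
      show (∑ k, Q ↑a k * y k) = ∑ b, subQ Q S a b * x b
      rw [sum_subtype_eq S _ (fun k hk => by rw [hy0 k hk, mul_zero])]
      exact Fintype.sum_congr _ _ fun b => by rw [hyval]; rfl
    have key : star y ⬝ᵥ Q *ᵥ y = star x ⬝ᵥ subQ Q S *ᵥ x := by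
      rw [star_trivial, star_trivial]
      show (∑ j, y j * (Q *ᵥ y) j) = ∑ a, x a * (subQ Q S *ᵥ x) a
      rw [sum_subtype_eq S _ (fun k hk => by rw [hy0 k hk, zero_mul])]
      exact Fintype.sum_congr _ _ fun a => by rw [hyval, h2]
    rw [← key]
    exact hQ.dotProduct_mulVec_pos hyne

theorem subQ_det_isUnit (hQ : Q.PosDef) (S : Finset (Fin n)) : IsUnit (subQ Q S).det :=
  (subQ_posDef hQ S).det_pos.ne'.isUnit

theorem Binv_apply_zero_left (h : i ∉ S) (j : Fin n) : Binv Q S i j = 0 :=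
  dif_neg (fun hc => h hc.1)

theorem Binv_apply_zero_right (i : Fin n) (h : j ∉ S) : Binv Q S i j = 0 :=
  dif_neg (fun hc => h hc.2)

theorem mask_apply_zero_left (Q : Matrix (Fin n) (Fin n) ℝ) (h : i ∉ S) (j : Fin n) :
    mask Q S i j = 0 := if_neg (fun hc => h hc.1)

theorem mask_apply_zero_right (Q : Matrix (Fin n) (Fin n) ℝ) (i : Fin n) (h : j ∉ S) :
    mask Q S i j = 0 := if_neg (fun hc => h hc.2)

theorem proj_transpose (S : Finset (Fin n)) : (proj S)ᵀ = proj S := by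
  ext i j
  by_cases h : i = j
  · subst h; rfl
  · have h2 : ¬(j = i) := fun hc => h hc.symm
    simp [proj, h, h2]

theorem mask_mul_Binv (hQ : Q.PosDef) (S : Finset (Fin n)) :
    mask Q S * Binv Q S = proj S := by
  ext i j
  rw [mul_apply]
  by_cases hi : i ∈ S
  · by_cases hj : j ∈ S
    · have hinv : subQ Q S * (subQ Q S)⁻¹ = 1 :=
        Matrix.mul_nonsing_inv _ (subQ_det_isUnit hQ S)
      calc ∑ k, mask Q S i k * Binv Q S k j
          = ∑ a : {x // x ∈ S}, subQ Q S ⟨i, hi⟩ a * (subQ Q S)⁻¹ a ⟨j, hj⟩ := by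
            rw [sum_subtype_eq S _
              (fun k hk => by rw [mask_apply_zero_right Q i hk, zero_mul])]
            refine Fintype.sum_congr _ _ fun a => ?_
            simp [mask, Binv, subQ, hi, hj, a.2]
        _ = (1 : Matrix {x // x ∈ S} {x // x ∈ S} ℝ) ⟨i, hi⟩ ⟨j, hj⟩ := by
            rw [← hinv, mul_apply]
        _ = proj S i j := by
            by_cases hij : i = j
            · subst hij; simp [Matrix.one_apply, proj, hi]
            · simp [Matrix.one_apply, proj, hij, Subtype.mk.injEq]
    · have : ∀ k, mask Q S i k * Binv Q S k j = 0 := fun k => by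
        rw [Binv_apply_zero_right k hj, mul_zero]
      have hp : ¬(i = j ∧ i ∈ S) := fun hc => hj (hc.1 ▸ hi)
      simp [this, proj, hp]
  · have : ∀ k, mask Q S i k * Binv Q S k j = 0 := fun k => by
      rw [mask_apply_zero_left Q hi k, zero_mul]
    have hp : ¬(i = j ∧ i ∈ S) := fun hc => hi hc.2
    simp [this, proj, hp]

theorem mask_transpose (hQ : Q.PosDef) (S : Finset (Fin n)) : (mask Q S)ᵀ = mask Q S := by
  ext i j
  show mask Q S j i = mask Q S i j
  have hq : Q j i = Q i j := congrFun (congrFun hQ.isHermitian i) j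
  by_cases hi : i ∈ S <;> by_cases hj : j ∈ S <;> simp [mask, hi, hj, hq]

theorem subQ_symm (hQ : Q.PosDef) (S : Finset (Fin n)) : (subQ Q S)ᵀ = subQ Q S := by
  ext a b
  exact Q_symm hQ b.1 a.1

theorem subQ_inv_symm (hQ : Q.PosDef) (S : Finset (Fin n)) :
    ((subQ Q S)⁻¹)ᵀ = (subQ Q S)⁻¹ := by
  rw [Matrix.transpose_nonsing_inv, subQ_symm hQ S]

theorem Binv_transpose (hQ : Q.PosDef) (S : Finset (Fin n)) :
    (Binv Q S)ᵀ = Binv Q S := by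
  ext i j
  show Binv Q S j i = Binv Q S i j
  by_cases hi : i ∈ S
  · by_cases hj : j ∈ S
    · have h := congrFun (congrFun (subQ_inv_symm hQ S) ⟨i, hi⟩) ⟨j, hj⟩
      simpa [Binv, hi, hj] using h
    · rw [Binv_apply_zero_left hj i, Binv_apply_zero_right i hj]
  · rw [Binv_apply_zero_right j hi, Binv_apply_zero_left hi j]

theorem proj_mul_apply (S : Finset (Fin n)) (A : Matrix (Fin n) (Fin n) ℝ) (i j : Fin n) :
    (proj S * A) i j = if i ∈ S then A i j else 0 := by
  rw [Matrix.mul_apply]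
  rw [Finset.sum_eq_single i (fun b _ hb => by
    have hib : ¬(i = b) := fun hc => hb hc.symm
    simp [proj, hib]) (fun h => absurd (Finset.mem_univ i) h)]
  by_cases hi : i ∈ S <;> simp [proj, hi]

theorem mul_proj_apply (S : Finset (Fin n)) (A : Matrix (Fin n) (Fin n) ℝ) (i j : Fin n) :
    (A * proj S) i j = if j ∈ S then A i j else 0 := by
  rw [Matrix.mul_apply]
  rw [Finset.sum_eq_single j (fun b _ hb => by simp [proj, hb])
    (fun h => absurd (Finset.mem_univ j) h)]
  by_cases hj : j ∈ S <;> simp [proj, hj]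

theorem proj_mul_left {A : Matrix (Fin n) (Fin n) ℝ} (hA : ∀ j ∉ S, ∀ k, A j k = 0) :
    proj S * A = A := by
  ext i j
  rw [proj_mul_apply]
  by_cases hi : i ∈ S
  · simp [hi]
  · simp [hi, hA i hi j]

theorem Binv_mul_mask (hQ : Q.PosDef) (S : Finset (Fin n)) :
    Binv Q S * mask Q S = proj S := by
  have h := congrArg Matrix.transpose (mask_mul_Binv hQ S)
  rwa [Matrix.transpose_mul, mask_transpose hQ S, Binv_transpose hQ S, proj_transpose] at h

theorem penrose (hQ : Q.PosDef) (S : Finset (Fin n)) :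
    mask Q S * Binv Q S * mask Q S = mask Q S ∧
    Binv Q S * mask Q S * Binv Q S = Binv Q S ∧
    (mask Q S * Binv Q S)ᵀ = mask Q S * Binv Q S ∧
    (Binv Q S * mask Q S)ᵀ = Binv Q S * mask Q S := by
  refine ⟨?_, ?_, ?_, ?_⟩
  · rw [mask_mul_Binv hQ S, proj_mul_left (fun j hj k => mask_apply_zero_left Q hj k)]
  · rw [Binv_mul_mask hQ S, proj_mul_left (fun j hj k => Binv_apply_zero_left hj k)]
  · rw [mask_mul_Binv hQ S, proj_transpose]
  · rw [Binv_mul_mask hQ S, proj_transpose]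

theorem pinv_mask (hQ : Q.PosDef) (S : Finset (Fin n)) :
    pinv (mask Q S) = Binv Q S :=
  pinv_eq (penrose hQ S)

theorem proj_mulVec (S : Finset (Fin n)) (x : Fin n → ℝ) (i : Fin n) :
    (proj S *ᵥ x) i = if i ∈ S then x i else 0 := by
  show (∑ j, proj S i j * x j) = _
  rw [Finset.sum_eq_single i (fun b _ hb => by
    have hib : ¬(i = b) := fun hc => hb hc.symm
    simp [proj, hib]) (fun h => absurd (Finset.mem_univ i) h)]
  by_cases hi : i ∈ S <;> simp [proj, hi]

theorem mask_eq_proj (Q : Matrix (Fin n) (Fin n) ℝ) (S : Finset (Fin n)) :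
    mask Q S = proj S * Q * proj S := by
  ext i j
  rw [mul_proj_apply, proj_mul_apply]
  by_cases hi : i ∈ S <;> by_cases hj : j ∈ S <;> simp [mask, hi, hj]

theorem mask_posSemidef (hQ : Q.PosDef) (S : Finset (Fin n)) :
    (mask Q S).PosSemidef := by
  have h := hQ.posSemidef.mul_mul_conjTranspose_same (proj S)
  have hc : (proj S)ᴴ = proj S := by
    ext i j
    simp only [Matrix.conjTranspose_apply, star_trivial]
    exact congrFun (congrFun (proj_transpose S) i) j
  rwa [hc, ← mask_eq_proj] at h

end Stmt6Aux

open Stmt6Aux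

/-- for `Q` symmetric positive definite and `S ⊆ T`, the pseudoinverse of the
restriction of `Q` to `T` dominates that of the restriction to `S` in the Loewner order. -/
theorem stmt6 {n : ℕ} (Q : Matrix (Fin n) (Fin n) ℝ) (hQ : Q.PosDef)
    (S T : Finset (Fin n)) (hST : S ⊆ T) :
    (pinv (mask Q T) - pinv (mask Q S)).PosSemidef := by
  rw [pinv_mask hQ T, pinv_mask hQ S]
  rw [posSemidef_iff_dotProduct_mulVec]
  constructor
  · have hT : (Binv Q T).IsHermitian := by
      show (Binv Q T)ᴴ = Binv Q T
      have := Binv_transpose hQ T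
      ext i j
      simp only [Matrix.conjTranspose_apply, star_trivial]
      exact congrFun (congrFun this i) j
    have hS : (Binv Q S).IsHermitian := by
      show (Binv Q S)ᴴ = Binv Q S
      have := Binv_transpose hQ S
      ext i j
      simp only [Matrix.conjTranspose_apply, star_trivial]
      exact congrFun (congrFun this i) j
    exact hT.sub hS
  · intro x
    rw [star_trivial]
    set M := mask Q T with hM
    set y := Binv Q T *ᵥ x with hy
    set z := Binv Q S *ᵥ x with hz
    have hy0 : ∀ i ∉ T, y i = 0 := by
      intro i hi
      show (∑ j, Binv Q T i j * x j) = 0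
      exact Finset.sum_eq_zero fun j _ => by rw [Binv_apply_zero_left hi j, zero_mul]
    have hz0 : ∀ i ∉ S, z i = 0 := by
      intro i hi
      show (∑ j, Binv Q S i j * x j) = 0
      exact Finset.sum_eq_zero fun j _ => by rw [Binv_apply_zero_left hi j, zero_mul]
    have hMy : ∀ i ∈ T, (M *ᵥ y) i = x i := by
      intro i hi
      rw [hy, hM, Matrix.mulVec_mulVec, mask_mul_Binv hQ T, proj_mulVec, if_pos hi]
    have hMz : ∀ i ∈ S, (M *ᵥ z) i = x i := by
      intro i hi
      have h1 : (M *ᵥ z) i = (mask Q S *ᵥ z) i := by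
        show (∑ k, M i k * z k) = ∑ k, mask Q S i k * z k
        refine Finset.sum_congr rfl fun k _ => ?_
        by_cases hk : k ∈ S
        · have : M i k = mask Q S i k := by simp [hM, mask, hi, hk, hST hi, hST hk]
          rw [this]
        · rw [hz0 k hk, mul_zero, mul_zero]
      rw [h1, hz, Matrix.mulVec_mulVec, mask_mul_Binv hQ S, proj_mulVec, if_pos hi]
    have d1 : y ⬝ᵥ (M *ᵥ y) = x ⬝ᵥ y := by
      rw [dotProduct_comm x y]
      refine Finset.sum_congr rfl fun i _ => ?_
      by_cases hi : i ∈ T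
      · rw [hMy i hi]
      · rw [hy0 i hi, zero_mul, zero_mul]
    have d2 : z ⬝ᵥ (M *ᵥ z) = x ⬝ᵥ z := by
      rw [dotProduct_comm x z]
      refine Finset.sum_congr rfl fun i _ => ?_
      by_cases hi : i ∈ S
      · rw [hMz i hi]
      · rw [hz0 i hi, zero_mul, zero_mul]
    have d3 : z ⬝ᵥ (M *ᵥ y) = x ⬝ᵥ z := by
      rw [dotProduct_comm x z]
      refine Finset.sum_congr rfl fun i _ => ?_
      by_cases hi : i ∈ S
      · rw [hMy i (hST hi)]
      · rw [hz0 i hi, zero_mul, zero_mul]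
    have d4 : y ⬝ᵥ (M *ᵥ z) = z ⬝ᵥ (M *ᵥ y) := by
      rw [dotProduct_mulVec y M z, ← Matrix.mulVec_transpose M y, mask_transpose hQ T,
        dotProduct_comm]
    have key : x ⬝ᵥ ((Binv Q T - Binv Q S) *ᵥ x) = (y - z) ⬝ᵥ (M *ᵥ (y - z)) := by
      rw [Matrix.sub_mulVec, dotProduct_sub, Matrix.mulVec_sub, sub_dotProduct,
        dotProduct_sub, dotProduct_sub, d1, d2, d3, d4, d3]
      ring
    rw [key]
    have hpsd := (mask_posSemidef hQ T).dotProduct_mulVec_nonneg (y - z)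
    simpa using hpsd
end

section
/- Let Q be an n×n Stieltjes matrix (symmetric positive definite with nonpositive off-diagonal entries). For fixed i, j ∈ [n], define the set function θ_{ij}(S) = ((Q ∘ e_S e_S⊤)†)_{ij} for S ⊆ [n]. Then θ_{ij} is nondecreasing: for S ⊆ T ⊆ [n], θ_{ij}(S) ≤ θ_{ij}(T). -/
open Matrix
open scoped Classical

section Aux

variable {ι : Type*} [Fintype ι] [DecidableEq ι]

/-- Sum over the full type of a function vanishing outside `P` equals the sum over
the subtype of `P`. -/
lemma sum_eq_sum_subtype (P : Finset ι) (f : ι → ℝ) (hf : ∀ i ∉ P, f i = 0) :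
    ∑ i, f i = ∑ i : {x // x ∈ P}, f ↑i := by
  rw [← Finset.sum_subtype P (fun x => Iff.rfl) f]
  exact (Finset.sum_subset (Finset.subset_univ P) (fun x _ hx => hf x hx)).symm

/-- The "min trick": if `A` is positive definite with nonpositive off-diagonal
entries and `A *ᵥ w` is entrywise nonnegative, then `w` is entrywise nonnegative. -/
lemma stieltjes_mulVec_nonneg (A : Matrix ι ι ℝ) (hA : A.PosDef)
    (hoff : ∀ i j : ι, i ≠ j → A i j ≤ 0) (w : ι → ℝ)
    (hb : ∀ k, 0 ≤ A.mulVec w k) : ∀ k, 0 ≤ w k := by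
  by_contra hcon
  push_neg at hcon
  obtain ⟨k₀, hk₀⟩ := hcon
  set y : ι → ℝ := fun k => min (w k) 0 with hy
  have hy_nonpos : ∀ k, y k ≤ 0 := fun k => min_le_right _ _
  have hy_zero : ∀ k, y k * (w k - y k) = 0 := by
    intro k
    rcases le_or_gt (w k) 0 with h | h
    · have : y k = w k := min_eq_left h
      rw [this]; ring
    · have : y k = 0 := min_eq_right h.le
      rw [this]; ring
  have hwy : ∀ k, 0 ≤ w k - y k := by
    intro k
    rcases le_or_gt (w k) 0 with h | h
    · have : y k = w k := min_eq_left h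
      rw [this]; linarith
    · have : y k = 0 := min_eq_right h.le
      rw [this]; linarith
  have hyne : y ≠ 0 := by
    intro h0
    have : y k₀ = 0 := congrFun h0 k₀
    have : min (w k₀) 0 = 0 := this
    rw [min_eq_left hk₀.le] at this
    linarith
  have hquad : 0 < y ⬝ᵥ A.mulVec y := by
    have := hA.dotProduct_mulVec_pos hyne
    simpa using this
  -- first: y ⬝ᵥ A *ᵥ w ≤ 0
  have h1 : y ⬝ᵥ A.mulVec w ≤ 0 := by
    apply Finset.sum_nonpos
    intro k _
    exact mul_nonpos_of_nonpos_of_nonneg (hy_nonpos k) (hb k)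
  -- second: 0 ≤ y ⬝ᵥ A *ᵥ (w - y)
  have h2 : 0 ≤ y ⬝ᵥ A.mulVec (w - y) := by
    unfold Matrix.mulVec dotProduct
    apply Finset.sum_nonneg
    intro k _
    rw [Finset.mul_sum]
    apply Finset.sum_nonneg
    intro l _
    rcases eq_or_ne k l with rfl | hkl
    · have : y k * (A k k * (w - y) k) = A k k * (y k * (w k - y k)) := by
        simp [Pi.sub_apply]; ring
      rw [this, hy_zero k, mul_zero]
    · have h3 : A k l ≤ 0 := hoff k l hkl
      have h4 : y k * (w - y) l ≤ 0 :=
        mul_nonpos_of_nonpos_of_nonneg (hy_nonpos k) (hwy l)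
      have : y k * (A k l * (w - y) l) = A k l * (y k * (w - y) l) := by ring
      rw [this]
      nlinarith
  have hsplit : y ⬝ᵥ A.mulVec y = y ⬝ᵥ A.mulVec w - y ⬝ᵥ A.mulVec (w - y) := by
    rw [Matrix.mulVec_sub, dotProduct_sub]
    ring
  rw [hsplit] at hquad
  linarith

/-- Entrywise nonnegativity of the inverse of a Stieltjes matrix. -/
lemma stieltjes_inv_nonneg (A : Matrix ι ι ℝ) (hA : A.PosDef)
    (hoff : ∀ i j : ι, i ≠ j → A i j ≤ 0) (i j : ι) : 0 ≤ A⁻¹ i j := by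
  have hdet : IsUnit A.det := (Matrix.isUnit_iff_isUnit_det A).mp hA.isUnit
  have hAA : A * A⁻¹ = 1 := Matrix.mul_nonsing_inv A hdet
  have key : ∀ k, 0 ≤ A.mulVec (fun l => A⁻¹ l j) k := by
    intro k
    have : A.mulVec (fun l => A⁻¹ l j) k = (A * A⁻¹) k j := by
      simp [Matrix.mulVec, Matrix.mul_apply, dotProduct]
    rw [this, hAA]
    by_cases h : k = j
    · subst h; simp
    · simp [Matrix.one_apply_ne h]
  exact stieltjes_mulVec_nonneg A hA hoff _ key i

/-- The principal submatrix (indexed by a finset) of a positive definite matrix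
is positive definite. -/
lemma posDef_submatrix_subtype (A : Matrix ι ι ℝ) (hA : A.PosDef) (P : Finset ι) :
    (A.submatrix (Subtype.val : {x // x ∈ P} → ι) Subtype.val).PosDef := by
  rw [Matrix.posDef_iff_dotProduct_mulVec]
  constructor
  · show (A.submatrix _ _)ᴴ = _
    rw [Matrix.conjTranspose_submatrix, hA.1]
  · intro x hx
    set y : ι → ℝ := fun k => if h : k ∈ P then x ⟨k, h⟩ else 0 with hy
    have hyP : ∀ k : {x // x ∈ P}, y ↑k = x k := by
      intro k
      simp only [hy, dif_pos k.2]
    have hyO : ∀ k ∉ P, y k = 0 := by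
      intro k hk
      simp only [hy, dif_neg hk]
    have hyne : y ≠ 0 := by
      intro h0
      apply hx
      funext k
      have := congrFun h0 ↑k
      rw [hyP k] at this
      exact this
    have hquad := hA.dotProduct_mulVec_pos hyne
    have hmv : ∀ k : ι, A.mulVec y k = ∑ l : {x // x ∈ P}, A k ↑l * x l := by
      intro k
      show ∑ l, A k l * y l = _
      rw [sum_eq_sum_subtype P (fun l => A k l * y l)
        (fun l hl => by show A k l * y l = 0; rw [hyO l hl, mul_zero])]
      exact Finset.sum_congr rfl fun l _ => by rw [hyP l]
    have heq : (star y) ⬝ᵥ A.mulVec y =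
        (star x) ⬝ᵥ (A.submatrix (Subtype.val : {x // x ∈ P} → ι) Subtype.val).mulVec x := by
      show ∑ k, star (y k) * A.mulVec y k = ∑ k : {x // x ∈ P}, star (x k) * _
      rw [sum_eq_sum_subtype P (fun k => star (y k) * A.mulVec y k)
        (fun k hk => by show star (y k) * (A *ᵥ y) k = 0; rw [hyO k hk]; simp)]
      refine Finset.sum_congr rfl fun k _ => ?_
      rw [hyP k, hmv ↑k]
      rfl
    rw [heq] at hquad
    exact hquad

/-- off-diagonal nonpositivity passes to principal submatrices. -/
lemma hoff_submatrix_subtype (A : Matrix ι ι ℝ)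
    (hoff : ∀ i j : ι, i ≠ j → A i j ≤ 0) (P : Finset ι) :
    ∀ i j : {x // x ∈ P}, i ≠ j →
      A.submatrix (Subtype.val : {x // x ∈ P} → ι) Subtype.val i j ≤ 0 := by
  intro i j hij
  exact hoff ↑i ↑j (fun h => hij (Subtype.ext h))

/-- MAIN comparison: entries of the inverse of a principal submatrix are bounded by
the corresponding entries of the inverse of the whole Stieltjes matrix. -/
lemma inv_submatrix_le (A : Matrix ι ι ℝ) (hA : A.PosDef)
    (hoff : ∀ i j : ι, i ≠ j → A i j ≤ 0) (P : Finset ι) (i j : {x // x ∈ P}) :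
    (A.submatrix (Subtype.val : {x // x ∈ P} → ι) Subtype.val)⁻¹ i j ≤ A⁻¹ ↑i ↑j := by
  set B := A.submatrix (Subtype.val : {x // x ∈ P} → ι) Subtype.val with hB
  have hBpd : B.PosDef := posDef_submatrix_subtype A hA P
  have hBoff := hoff_submatrix_subtype A hoff P
  have hdetA : IsUnit A.det := (Matrix.isUnit_iff_isUnit_det A).mp hA.isUnit
  have hdetB : IsUnit B.det := (Matrix.isUnit_iff_isUnit_det B).mp hBpd.isUnit
  have hAA : A * A⁻¹ = 1 := Matrix.mul_nonsing_inv A hdetA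
  have hBB : B * B⁻¹ = 1 := Matrix.mul_nonsing_inv B hdetB
  have hBinv_nonneg : ∀ k l : {x // x ∈ P}, 0 ≤ B⁻¹ k l :=
    stieltjes_inv_nonneg B hBpd hBoff
  -- the two columns
  set x : ι → ℝ := fun k => if h : k ∈ P then B⁻¹ ⟨k, h⟩ j else 0 with hx
  set z : ι → ℝ := fun k => A⁻¹ k ↑j with hz
  have hxP : ∀ k : {x // x ∈ P}, x ↑k = B⁻¹ k j := by
    intro k; simp only [hx, dif_pos k.2]
  have hxO : ∀ k ∉ P, x k = 0 := fun k hk => by simp only [hx, dif_neg hk]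
  -- A *ᵥ x
  have hmx : ∀ k : ι, A.mulVec x k = ∑ l : {x // x ∈ P}, A k ↑l * B⁻¹ l j := by
    intro k
    show ∑ l, A k l * x l = _
    rw [sum_eq_sum_subtype P (fun l => A k l * x l)
      (fun l hl => by show A k l * x l = 0; rw [hxO l hl, mul_zero])]
    exact Finset.sum_congr rfl fun l _ => by rw [hxP l]
  have hmz : ∀ k : ι, A.mulVec z k = if k = ↑j then 1 else 0 := by
    intro k
    have : A.mulVec z k = (A * A⁻¹) k ↑j := by
      simp [hz, Matrix.mulVec, Matrix.mul_apply, dotProduct]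
    rw [this, hAA, Matrix.one_apply]
  -- key: A *ᵥ (z - x) is entrywise nonnegative
  have hkey : ∀ k, 0 ≤ A.mulVec (z - x) k := by
    intro k
    rw [Matrix.mulVec_sub]
    show 0 ≤ A.mulVec z k - A.mulVec x k
    rw [hmz k, hmx k]
    by_cases hk : k ∈ P
    · -- in this case A *ᵥ x agrees with B * B⁻¹ = 1
      have : ∑ l : {x // x ∈ P}, A k ↑l * B⁻¹ l j = (B * B⁻¹) ⟨k, hk⟩ j := by
        rw [Matrix.mul_apply]
        rfl
      rw [this, hBB, Matrix.one_apply]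
      have : ((⟨k, hk⟩ : {x // x ∈ P}) = j) ↔ (k = ↑j) := by
        constructor
        · intro h; rw [← h]
        · intro h; exact Subtype.ext h
      by_cases h : k = ↑j
      · rw [if_pos h, if_pos (this.mpr h)]; norm_num
      · rw [if_neg h, if_neg (fun hc => h (this.mp hc))]; norm_num
    · -- k outside P: the sum is nonpositive, the indicator is zero
      have hne : k ≠ ↑j := fun h => hk (h ▸ j.2)
      rw [if_neg hne]
      have : ∑ l : {x // x ∈ P}, A k ↑l * B⁻¹ l j ≤ 0 := by
        apply Finset.sum_nonpos
        intro l _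
        exact mul_nonpos_of_nonpos_of_nonneg
          (hoff k ↑l (fun h => hk (h ▸ l.2))) (hBinv_nonneg l j)
      linarith
  have := stieltjes_mulVec_nonneg A hA hoff (z - x) hkey ↑i
  have hzi : z ↑i - x ↑i = A⁻¹ ↑i ↑j - B⁻¹ i j := by
    rw [hz]
    have : x ↑i = B⁻¹ i j := by
      rw [hx]
      simp only [dif_pos i.2]
    rw [this]
  have h0 : (0:ℝ) ≤ z ↑i - x ↑i := this
  rw [hzi] at h0
  linarith

end Aux

section Embd

variable {n : ℕ}

/-- Embed a matrix indexed by a subtype of `Fin n` back into `Fin n`, by zero. -/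
noncomputable def embd (S : Finset (Fin n))
    (M : Matrix {x // x ∈ S} {x // x ∈ S} ℝ) : Matrix (Fin n) (Fin n) ℝ :=
  Matrix.of fun i j => if h : i ∈ S ∧ j ∈ S then M ⟨i, h.1⟩ ⟨j, h.2⟩ else 0

lemma embd_apply_mem (S : Finset (Fin n)) (M : Matrix {x // x ∈ S} {x // x ∈ S} ℝ)
    {i j : Fin n} (hi : i ∈ S) (hj : j ∈ S) : embd S M i j = M ⟨i, hi⟩ ⟨j, hj⟩ := by
  simp only [embd, Matrix.of_apply, dif_pos (And.intro hi hj)]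

lemma embd_apply_not_mem (S : Finset (Fin n)) (M : Matrix {x // x ∈ S} {x // x ∈ S} ℝ)
    {i j : Fin n} (h : ¬(i ∈ S ∧ j ∈ S)) : embd S M i j = 0 := by
  simp only [embd, Matrix.of_apply, dif_neg h]

lemma embd_mul (S : Finset (Fin n)) (M N : Matrix {x // x ∈ S} {x // x ∈ S} ℝ) :
    embd S M * embd S N = embd S (M * N) := by
  ext i j
  rw [Matrix.mul_apply]
  by_cases h : i ∈ S ∧ j ∈ S
  · rw [embd_apply_mem S (M * N) h.1 h.2, Matrix.mul_apply]
    rw [sum_eq_sum_subtype S (fun k => embd S M i k * embd S N k j)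
      (fun k hk => by show embd S M i k * embd S N k j = 0; rw [embd_apply_not_mem S M (fun hc => hk hc.2), zero_mul])]
    refine Finset.sum_congr rfl fun k _ => ?_
    rw [embd_apply_mem S M h.1 k.2, embd_apply_mem S N k.2 h.2]
  · rw [embd_apply_not_mem S (M * N) h]
    apply Finset.sum_eq_zero
    intro k _
    by_cases hi : i ∈ S
    · by_cases hj : j ∈ S
      · exact absurd ⟨hi, hj⟩ h
      · rw [embd_apply_not_mem S N (fun hc => hj hc.2), mul_zero]
    · rw [embd_apply_not_mem S M (fun hc => hi hc.1), zero_mul]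

lemma embd_transpose (S : Finset (Fin n)) (M : Matrix {x // x ∈ S} {x // x ∈ S} ℝ) :
    (embd S M)ᵀ = embd S Mᵀ := by
  ext i j
  rw [Matrix.transpose_apply]
  by_cases h : i ∈ S ∧ j ∈ S
  · rw [embd_apply_mem S M h.2 h.1, embd_apply_mem S Mᵀ h.1 h.2, Matrix.transpose_apply]
  · rw [embd_apply_not_mem S M (fun hc => h ⟨hc.2, hc.1⟩), embd_apply_not_mem S Mᵀ h]

lemma mask_eq_embd (Q : Matrix (Fin n) (Fin n) ℝ) (S : Finset (Fin n)) :
    mask Q S = embd S (Q.submatrix (Subtype.val : {x // x ∈ S} → Fin n) Subtype.val) := by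
  ext i j
  by_cases h : i ∈ S ∧ j ∈ S
  · rw [embd_apply_mem S _ h.1 h.2]
    simp only [mask, Matrix.of_apply, if_pos h, Matrix.submatrix_apply]
  · rw [embd_apply_not_mem S _ h]
    simp only [mask, Matrix.of_apply, if_neg h]

/-- Uniqueness of the Moore–Penrose pseudoinverse: if `B` satisfies the four
Penrose equations for `A`, then `pinv A = B`. -/
lemma pinv_eq_of {m : Type*} [Fintype m] [DecidableEq m] (A B : Matrix m m ℝ)
    (h1 : A * B * A = A) (h2 : B * A * B = B)
    (h3 : (A * B)ᵀ = A * B) (h4 : (B * A)ᵀ = B * A) : pinv A = B := by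
  have hex : ∃ B : Matrix m m ℝ,
      A * B * A = A ∧ B * A * B = B ∧ (A * B)ᵀ = A * B ∧ (B * A)ᵀ = B * A :=
    ⟨B, h1, h2, h3, h4⟩
  rw [pinv, dif_pos hex]
  obtain ⟨g1, g2, g3, g4⟩ := hex.choose_spec
  set C := hex.choose with hC
  -- A * B = A * C
  have hAt : Aᵀ = Aᵀ * (A * C) := by
    conv_lhs => rw [← g1]
    rw [Matrix.transpose_mul, g3]
  have hABAC : A * B = A * C := by
    calc A * B = (A * B)ᵀ := h3.symm
      _ = Bᵀ * Aᵀ := Matrix.transpose_mul A B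
      _ = Bᵀ * (Aᵀ * (A * C)) := by rw [← hAt]
      _ = (Bᵀ * Aᵀ) * (A * C) := by rw [Matrix.mul_assoc]
      _ = (A * B)ᵀ * (A * C) := by rw [Matrix.transpose_mul A B]
      _ = (A * B) * (A * C) := by rw [h3]
      _ = ((A * B) * A) * C := (Matrix.mul_assoc (A * B) A C).symm
      _ = A * C := by rw [h1]
  -- B * A = C * A
  have hAt' : Aᵀ = (C * A) * Aᵀ := by
    conv_lhs => rw [← g1, Matrix.mul_assoc]
    rw [Matrix.transpose_mul, g4]
  have hBACA : B * A = C * A := by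
    calc B * A = (B * A)ᵀ := h4.symm
      _ = Aᵀ * Bᵀ := Matrix.transpose_mul B A
      _ = ((C * A) * Aᵀ) * Bᵀ := by rw [← hAt']
      _ = (C * A) * (Aᵀ * Bᵀ) := by rw [Matrix.mul_assoc]
      _ = (C * A) * (B * A)ᵀ := by rw [← Matrix.transpose_mul B A]
      _ = (C * A) * (B * A) := by rw [h4]
      _ = C * ((A * B) * A) := by
            rw [Matrix.mul_assoc C A (B * A), ← Matrix.mul_assoc A B A]
      _ = C * A := by rw [h1]
  calc C = C * A * C := g2.symm
    _ = (B * A) * C := by rw [← hBACA]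
    _ = B * (A * C) := Matrix.mul_assoc B A C
    _ = B * (A * B) := by rw [← hABAC]
    _ = B * A * B := (Matrix.mul_assoc B A B).symm
    _ = B := h2

/-- The pseudoinverse of a masked positive definite matrix is the embedding of the
inverse of the corresponding principal submatrix. -/
lemma pinv_mask (Q : Matrix (Fin n) (Fin n) ℝ) (hQ : Q.PosDef) (S : Finset (Fin n)) :
    pinv (mask Q S) =
      embd S (Q.submatrix (Subtype.val : {x // x ∈ S} → Fin n) Subtype.val)⁻¹ := by
  set A := Q.submatrix (Subtype.val : {x // x ∈ S} → Fin n) Subtype.val with hA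
  have hApd : A.PosDef := posDef_submatrix_subtype Q hQ S
  have hdet : IsUnit A.det := (Matrix.isUnit_iff_isUnit_det A).mp hApd.isUnit
  have hAA : A * A⁻¹ = 1 := Matrix.mul_nonsing_inv A hdet
  have hAA' : A⁻¹ * A = 1 := Matrix.nonsing_inv_mul A hdet
  rw [mask_eq_embd]
  apply pinv_eq_of
  · rw [embd_mul, embd_mul, hAA, Matrix.one_mul]
  · rw [embd_mul, embd_mul, hAA', Matrix.one_mul]
  · rw [embd_mul, hAA, embd_transpose, Matrix.transpose_one]
  · rw [embd_mul, hAA', embd_transpose, Matrix.transpose_one]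

end Embd

/-- for a Stieltjes matrix `Q`, the set function
`θ_{ij}(S) = ((Q ∘ e_S e_Sᵀ)†)_{ij}` is nondecreasing under inclusion. -/
theorem stmt7 {n : ℕ} (Q : Matrix (Fin n) (Fin n) ℝ)
    (hQ : Q.PosDef) (hoff : ∀ i j : Fin n, i ≠ j → Q i j ≤ 0)
    (i j : Fin n) (S T : Finset (Fin n)) (hST : S ⊆ T) :
    pinv (mask Q S) i j ≤ pinv (mask Q T) i j := by
  rw [pinv_mask Q hQ S, pinv_mask Q hQ T]
  set AS := Q.submatrix (Subtype.val : {x // x ∈ S} → Fin n) Subtype.val with hAS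
  set AT := Q.submatrix (Subtype.val : {x // x ∈ T} → Fin n) Subtype.val with hAT
  have hATpd : AT.PosDef := posDef_submatrix_subtype Q hQ T
  have hAToff : ∀ a b : {x // x ∈ T}, a ≠ b → AT a b ≤ 0 :=
    hoff_submatrix_subtype Q hoff T
  by_cases hS : i ∈ S ∧ j ∈ S
  · have hiT : i ∈ T := hST hS.1
    have hjT : j ∈ T := hST hS.2
    rw [embd_apply_mem S _ hS.1 hS.2, embd_apply_mem T _ hiT hjT]
    -- indices of S inside T
    set P : Finset {x // x ∈ T} := Finset.univ.filter (fun x => ↑x ∈ S) with hP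
    have hmemP : ∀ y : {x // x ∈ T}, y ∈ P ↔ ↑y ∈ S := by
      intro y; simp [hP]
    -- the equivalence between the double subtype and the subtype of S
    set e : {y : {x // x ∈ T} // y ∈ P} ≃ {x // x ∈ S} :=
      { toFun := fun y => ⟨↑↑y, (hmemP ↑y).mp y.2⟩
        invFun := fun s => ⟨⟨↑s, hST s.2⟩, (hmemP _).mpr s.2⟩
        left_inv := fun y => by ext; rfl
        right_inv := fun s => by ext; rfl } with he
    have hsub : AT.submatrix (Subtype.val : {y // y ∈ P} → {x // x ∈ T}) Subtype.val
        = AS.submatrix e e := by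
      ext a b
      rfl
    have hmain := inv_submatrix_le AT hATpd hAToff P
      ⟨⟨i, hiT⟩, (hmemP _).mpr hS.1⟩ ⟨⟨j, hjT⟩, (hmemP _).mpr hS.2⟩
    rw [hsub] at hmain
    rw [Matrix.inv_submatrix_equiv AS e e] at hmain
    have : (AS⁻¹).submatrix (⇑e) (⇑e)
        ⟨⟨i, hiT⟩, (hmemP _).mpr hS.1⟩ ⟨⟨j, hjT⟩, (hmemP _).mpr hS.2⟩
        = AS⁻¹ ⟨i, hS.1⟩ ⟨j, hS.2⟩ := rfl
    rw [this] at hmain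
    exact hmain
  · rw [embd_apply_not_mem S _ hS]
    by_cases hT : i ∈ T ∧ j ∈ T
    · rw [embd_apply_mem T _ hT.1 hT.2]
      exact stieltjes_inv_nonneg AT hATpd hAToff _ _
    · rw [embd_apply_not_mem T _ hT]
end

section
/- Let Q be an n×n Stieltjes matrix. For fixed i, j ∈ [n], the set function θ_{ij}(S) = ((Q ∘ e_S e_S⊤)†)_{ij} is supermodular: for all S, T ⊆ [n], θ_{ij}(S ∪ T) + θ_{ij}(S ∩ T) ≥ θ_{ij}(S) + θ_{ij}(T). -/
open Matrix
open scoped Classical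

namespace Stmt8Aux

lemma mp_unique {m : Type*} [Fintype m] {A B C : Matrix m m ℝ}
    (hB1 : A * B * A = A) (hB2 : B * A * B = B) (hB3 : (A * B)ᵀ = A * B) (hB4 : (B * A)ᵀ = B * A)
    (hC1 : A * C * A = A) (hC2 : C * A * C = C) (hC3 : (A * C)ᵀ = A * C) (hC4 : (C * A)ᵀ = C * A) :
    B = C := by
  have key1 : Aᵀ = Aᵀ * (A * C) := by
    conv_lhs => rw [← hC1]
    rw [Matrix.transpose_mul, hC3]
  have key2 : Aᵀ = (C * A) * Aᵀ := by
    conv_lhs => rw [← hC1, Matrix.mul_assoc]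
    rw [Matrix.transpose_mul, hC4]
  have hAB : A * B = A * C := by
    calc A * B = Bᵀ * Aᵀ := by rw [← Matrix.transpose_mul, hB3]
    _ = Bᵀ * (Aᵀ * (A * C)) := by rw [← key1]
    _ = (Bᵀ * Aᵀ) * (A * C) := by rw [Matrix.mul_assoc]
    _ = (A * B) * (A * C) := by rw [← Matrix.transpose_mul, hB3]
    _ = ((A * B) * A) * C := by simp only [Matrix.mul_assoc]
    _ = A * C := by rw [hB1]
  have hBA : B * A = C * A := by
    calc B * A = Aᵀ * Bᵀ := by rw [← Matrix.transpose_mul, hB4]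
    _ = ((C * A) * Aᵀ) * Bᵀ := by rw [← key2]
    _ = (C * A) * (Aᵀ * Bᵀ) := by rw [Matrix.mul_assoc]
    _ = (C * A) * (B * A) := by rw [← Matrix.transpose_mul, hB4]
    _ = C * ((A * B) * A) := by simp only [Matrix.mul_assoc]
    _ = C * A := by rw [hB1]
  calc B = B * A * B := hB2.symm
  _ = C * A * B := by rw [hBA]
  _ = C * (A * B) := by rw [Matrix.mul_assoc]
  _ = C * (A * C) := by rw [hAB]
  _ = C * A * C := by rw [Matrix.mul_assoc]
  _ = C := hC2

lemma pinv_eq_of {m : Type*} [Fintype m] [DecidableEq m] {A B : Matrix m m ℝ}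
    (h1 : A * B * A = A) (h2 : B * A * B = B) (h3 : (A * B)ᵀ = A * B) (h4 : (B * A)ᵀ = B * A) :
    pinv A = B := by
  have hex : ∃ B : Matrix m m ℝ,
      A * B * A = A ∧ B * A * B = B ∧ (A * B)ᵀ = A * B ∧ (B * A)ᵀ = B * A := ⟨B, h1, h2, h3, h4⟩
  rw [pinv, dif_pos hex]
  obtain ⟨g1, g2, g3, g4⟩ := hex.choose_spec
  exact mp_unique g1 g2 g3 g4 h1 h2 h3 h4

variable {n : ℕ} {Q : Matrix (Fin n) (Fin n) ℝ}

/-- diagonal indicator matrix of `S` -/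
def Emat (S : Finset (Fin n)) : Matrix (Fin n) (Fin n) ℝ :=
  Matrix.of fun i j => if i = j ∧ i ∈ S then 1 else 0

/-- `P` is the (embedded) inverse of `Q` restricted to `S`, with nonneg entries. -/
def Good (Q : Matrix (Fin n) (Fin n) ℝ) (S : Finset (Fin n))
    (P : Matrix (Fin n) (Fin n) ℝ) : Prop :=
  Pᵀ = P ∧ (∀ i j, i ∉ S → P i j = 0) ∧ mask Q S * P = Emat S ∧ ∀ i j, 0 ≤ P i j

lemma good_col {S P} (hg : Good Q S P) : ∀ i j : Fin n, j ∉ S → P i j = 0 := by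
  intro i j hj
  rw [← hg.1]; exact hg.2.1 j i hj

lemma mask_transpose {S} (hQs : Qᵀ = Q) : (mask Q S)ᵀ = mask Q S := by
  ext i j
  have h : Q j i = Q i j := congrFun (congrFun hQs i) j
  simp only [mask, transpose_apply, of_apply, h]
  by_cases h2 : i ∈ S ∧ j ∈ S
  · rw [if_pos ⟨h2.2, h2.1⟩, if_pos h2]
  · rw [if_neg (by tauto), if_neg h2]

lemma Emat_transpose {S : Finset (Fin n)} : (Emat (n := n) S)ᵀ = Emat S := by
  ext i j
  simp only [Emat, transpose_apply, of_apply]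
  by_cases h : i = j
  · subst h; rfl
  · rw [if_neg (by tauto), if_neg (by tauto)]

lemma Emat_mul_mask {S : Finset (Fin n)} : Emat S * mask Q S = mask Q S := by
  ext i j
  simp only [Emat, mask, Matrix.mul_apply, of_apply]
  by_cases hi : i ∈ S
  · rw [Finset.sum_eq_single i]
    · simp [hi]
    · intro b _ hb; rw [if_neg (by tauto), zero_mul]
    · intro h; exact absurd (Finset.mem_univ i) h
  · rw [if_neg (by tauto), Finset.sum_eq_zero]
    intro b _
    by_cases hb : i = b
    · subst hb; rw [if_neg (by tauto), zero_mul]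
    · rw [if_neg (by tauto), zero_mul]

lemma Emat_mul_P {S P} (hg : Good Q S P) : Emat S * P = P := by
  ext i j
  simp only [Emat, Matrix.mul_apply, of_apply]
  by_cases hi : i ∈ S
  · rw [Finset.sum_eq_single i]
    · simp [hi]
    · intro b _ hb; rw [if_neg (by tauto), zero_mul]
    · intro h; exact absurd (Finset.mem_univ i) h
  · rw [hg.2.1 i j hi, Finset.sum_eq_zero]
    intro b _
    by_cases hb : i = b
    · subst hb; rw [if_neg (by tauto), zero_mul]
    · rw [if_neg (by tauto), zero_mul]

lemma good_pinv {S P} (hQs : Qᵀ = Q) (hg : Good Q S P) : pinv (mask Q S) = P := by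
  have hAP : mask Q S * P = Emat S := hg.2.2.1
  have hPA : P * mask Q S = Emat S := by
    have := congrArg Matrix.transpose hAP
    rwa [Matrix.transpose_mul, mask_transpose hQs, hg.1, Emat_transpose] at this
  refine pinv_eq_of ?_ ?_ ?_ ?_
  · rw [hAP]; exact Emat_mul_mask
  · rw [hPA]; exact Emat_mul_P hg
  · rw [hAP, Emat_transpose]
  · rw [hPA, Emat_transpose]


lemma mask_pos {S' : Finset (Fin n)} {i j : Fin n} (hi : i ∈ S') (hj : j ∈ S') :
    mask Q S' i j = Q i j := by simp [mask, hi, hj]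

lemma mask_neg {S' : Finset (Fin n)} {i j : Fin n} (h : i ∉ S' ∨ j ∉ S') :
    mask Q S' i j = 0 := by
  rcases h with h | h <;> simp [mask, h]

/-- Schur complement vector -/
noncomputable def bv (Q : Matrix (Fin n) (Fin n) ℝ) (S : Finset (Fin n)) (k : Fin n) :
    Fin n → ℝ :=
  fun i => if i = k then 1 else ∑ l, pinv (mask Q S) i l * (-Q l k)

/-- Schur complement scalar -/
noncomputable def gam (Q : Matrix (Fin n) (Fin n) ℝ) (S : Finset (Fin n)) (k : Fin n) : ℝ :=
  Q k k - ∑ l, ∑ m, Q k l * pinv (mask Q S) l m * Q m k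

section Construct
variable (hQ : Q.PosDef) (hoff : ∀ i j : Fin n, i ≠ j → Q i j ≤ 0)
  {S : Finset (Fin n)} {k : Fin n} (hk : k ∉ S) (hg : Good Q S (pinv (mask Q S)))

include hQ

lemma hQs : Qᵀ = Q := by
  ext i j
  rw [transpose_apply, ← star_trivial (Q j i), hQ.1.apply]

omit hQ
include hg

lemma usup : ∀ i ∉ S, ((pinv (mask Q S)) *ᵥ (fun l => Q l k)) i = 0 := by
  intro i hi
  simp only [mulVec, dotProduct]
  exact Finset.sum_eq_zero fun l _ => by rw [hg.2.1 i l hi, zero_mul]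

include hk

lemma bv_eq : bv Q S k = Pi.single k 1 - (pinv (mask Q S)) *ᵥ (fun l => Q l k) := by
  funext i
  by_cases hik : i = k
  · subst hik
    simp only [bv, if_pos rfl, if_true, Pi.sub_apply, Pi.single_eq_same]
    rw [usup hg i hk]
    ring
  · simp only [bv, if_neg hik, Pi.sub_apply, Pi.single_eq_of_ne hik]
    simp only [mulVec, dotProduct, mul_neg, Finset.sum_neg_distrib]
    ring

omit hk hg

lemma Emat_mulVec (S' : Finset (Fin n)) (w : Fin n → ℝ) :
    Emat S' *ᵥ w = fun i => if i ∈ S' then w i else 0 := by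
  funext i
  simp only [mulVec, dotProduct, Emat, of_apply]
  by_cases hi : i ∈ S'
  · rw [Finset.sum_eq_single i]
    · simp [hi]
    · intro b _ hb; rw [if_neg (by tauto), zero_mul]
    · intro h; exact absurd (Finset.mem_univ i) h
  · rw [if_neg hi, Finset.sum_eq_zero]
    intro b _
    by_cases hb : i = b
    · subst hb; rw [if_neg (by tauto), zero_mul]
    · rw [if_neg (by tauto), zero_mul]

include hg

lemma hAu : mask Q S *ᵥ ((pinv (mask Q S)) *ᵥ (fun l => Q l k))
    = fun i => if i ∈ S then Q i k else 0 := by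
  rw [Matrix.mulVec_mulVec, hg.2.2.1, Emat_mulVec]

lemma uQu : ((pinv (mask Q S)) *ᵥ (fun l => Q l k)) ⬝ᵥ (Q *ᵥ ((pinv (mask Q S)) *ᵥ (fun l => Q l k)))
    = ((pinv (mask Q S)) *ᵥ (fun l => Q l k)) ⬝ᵥ (fun l => Q l k) := by
  set w : Fin n → ℝ := (pinv (mask Q S)) *ᵥ (fun l => Q l k) with hw
  have hws : ∀ i ∉ S, w i = 0 := usup hg
  have h1 : w ⬝ᵥ (Q *ᵥ w) = w ⬝ᵥ (mask Q S *ᵥ w) := by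
    simp only [dotProduct, mulVec]
    refine Finset.sum_congr rfl fun i _ => ?_
    by_cases hi : i ∈ S
    · congr 1
      refine Finset.sum_congr rfl fun l _ => ?_
      by_cases hl : l ∈ S
      · rw [show mask Q S i l = Q i l from by simp [mask, hi, hl]]
      · rw [hws l hl, mul_zero, mul_zero]
    · rw [hws i hi, zero_mul, zero_mul]
  rw [h1, hAu hg]
  simp only [dotProduct]
  refine Finset.sum_congr rfl fun i _ => ?_
  by_cases hi : i ∈ S
  · rw [if_pos hi]
  · rw [hws i hi, zero_mul, zero_mul]

include hQ

lemma gam_eq : gam Q S k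
    = Q k k - ((pinv (mask Q S)) *ᵥ (fun l => Q l k)) ⬝ᵥ (fun l => Q l k) := by
  have hs := hQs hQ
  rw [gam]
  congr 1
  rw [Finset.sum_comm]
  simp only [dotProduct, mulVec, Finset.sum_mul]
  refine Finset.sum_congr rfl fun m _ => Finset.sum_congr rfl fun l _ => ?_
  have h1 : Q l k = Q k l := congrFun (congrFun hs k) l
  have h2 : pinv (mask Q S) m l = pinv (mask Q S) l m := congrFun (congrFun hg.1 l) m
  rw [← h1, ← h2]; ring

include hk

lemma gam_pos : 0 < gam Q S k := by
  set w : Fin n → ℝ := (pinv (mask Q S)) *ᵥ (fun l => Q l k) with hw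
  have hws : ∀ i ∉ S, w i = 0 := usup hg
  set x : Fin n → ℝ := Pi.single k 1 - w with hx
  have hxne : x ≠ 0 := by
    intro h
    have h2 := congrFun h k
    rw [hx] at h2
    simp only [Pi.sub_apply, Pi.single_eq_same, Pi.zero_apply] at h2
    rw [hws k hk] at h2
    linarith
  have hpos := hQ.dotProduct_mulVec_pos hxne
  rw [show star x = x from by simp [hx]] at hpos
  have hs := hQs hQ
  have hexp : x ⬝ᵥ (Q *ᵥ x) = gam Q S k := by
    rw [hx, Matrix.mulVec_sub, dotProduct_sub, sub_dotProduct, sub_dotProduct,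
      Matrix.mulVec_single, uQu hg, gam_eq hQ hg]
    rw [single_dotProduct, single_dotProduct]
    have hqu : (Q *ᵥ w) k = w ⬝ᵥ (fun l => Q l k) := by
      simp only [mulVec, dotProduct]
      refine Finset.sum_congr rfl fun l _ => ?_
      have h1 : Q l k = Q k l := congrFun (congrFun hs k) l
      rw [← h1]; ring
    rw [hqu]
    have hu1 : w ⬝ᵥ (fun i => Q i k * 1) = w ⬝ᵥ (fun l => Q l k) := by
      simp only [dotProduct, mul_one]
    rw [show (MulOpposite.op (1:ℝ) • Q.col k) = fun l => Q l k from by funext l; simp]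
    ring
  linarith [hexp ▸ hpos]

include hoff

lemma bv_nonneg (i : Fin n) : 0 ≤ bv Q S k i := by
  rw [bv]
  by_cases hik : i = k
  · rw [if_pos hik]; norm_num
  · rw [if_neg hik]
    refine Finset.sum_nonneg fun l _ => ?_
    by_cases hlk : l = k
    · subst hlk; rw [good_col hg i l hk, zero_mul]
    · exact mul_nonneg (hg.2.2.2 i l) (neg_nonneg.2 (hoff l k hlk))

omit hk hoff

lemma bv_support (i : Fin n) (hi : i ∉ insert k S) : bv Q S k i = 0 := by
  rw [bv, if_neg (by intro h; exact hi (by simp [h]))]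
  exact Finset.sum_eq_zero fun l _ => by
    rw [hg.2.1 i l (fun h => hi (Finset.mem_insert_of_mem h)), zero_mul]

include hk

lemma r1 (j : Fin n) :
    ∑ l, mask Q (insert k S) k l * pinv (mask Q S) l j
      = ((pinv (mask Q S)) *ᵥ (fun l => Q l k)) j := by
  have hs := hQs hQ
  simp only [mulVec, dotProduct]
  refine Finset.sum_congr rfl fun l _ => ?_
  by_cases hl : l ∈ insert k S
  · rw [mask_pos (Finset.mem_insert_self k S) hl]
    have h1 : Q l k = Q k l := congrFun (congrFun hs k) l
    have h2 : pinv (mask Q S) l j = pinv (mask Q S) j l :=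
      congrFun (congrFun hg.1 j) l
    rw [h1, h2]; ring
  · have hlS : l ∉ S := fun h => hl (Finset.mem_insert_of_mem h)
    rw [hg.2.1 l j hlS, good_col hg j l hlS, mul_zero, zero_mul]

omit hk hQ

lemma r2 (i : Fin n) (hi : i ∈ S) (j : Fin n) :
    ∑ l, mask Q (insert k S) i l * pinv (mask Q S) l j = Emat S i j := by
  have : ∑ l, mask Q (insert k S) i l * pinv (mask Q S) l j
      = ∑ l, mask Q S i l * pinv (mask Q S) l j := by
    refine Finset.sum_congr rfl fun l _ => ?_
    by_cases hl : l ∈ S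
    · rw [mask_pos (Finset.mem_insert_of_mem hi) (Finset.mem_insert_of_mem hl), mask_pos hi hl]
    · rw [hg.2.1 l j hl, mul_zero, mul_zero]
  rw [this, ← Matrix.mul_apply, hg.2.2.1]

include hk hQ

lemma r3 : ∑ l, mask Q (insert k S) k l * bv Q S k l = gam Q S k := by
  have hs := hQs hQ
  set w : Fin n → ℝ := (pinv (mask Q S)) *ᵥ (fun l => Q l k) with hw
  have hws : ∀ i ∉ S, w i = 0 := usup hg
  have hterm : ∀ l, mask Q (insert k S) k l * bv Q S k l
      = (if l = k then Q k k else 0) - Q l k * w l := by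
    intro l
    by_cases hlk : l = k
    · subst hlk
      rw [if_pos rfl, mask_pos (Finset.mem_insert_self l S) (Finset.mem_insert_self l S),
        show bv Q S l l = 1 from by rw [bv, if_pos rfl], hws l hk]
      ring
    · rw [if_neg hlk, bv, if_neg hlk]
      by_cases hl : l ∈ S
      · rw [mask_pos (Finset.mem_insert_self k S) (Finset.mem_insert_of_mem hl)]
        have h1 : Q l k = Q k l := congrFun (congrFun hs k) l
        have h2 : (∑ m, pinv (mask Q S) l m * (-Q m k)) = -w l := by
          rw [hw]; simp only [mulVec, dotProduct, mul_neg, Finset.sum_neg_distrib]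
        rw [h2, h1]; ring
      · rw [mask_neg (Or.inr (by simp [hlk, hl])), hws l hl]
        ring
  rw [Finset.sum_congr rfl fun l _ => hterm l, Finset.sum_sub_distrib,
    Finset.sum_ite_eq' Finset.univ k (fun _ => Q k k), if_pos (Finset.mem_univ k),
    gam_eq hQ hg]
  congr 1
  simp only [dotProduct]
  exact Finset.sum_congr rfl fun l _ => mul_comm _ _

lemma r4 (i : Fin n) (hi : i ∈ S) : ∑ l, mask Q (insert k S) i l * bv Q S k l = 0 := by
  set w : Fin n → ℝ := (pinv (mask Q S)) *ᵥ (fun l => Q l k) with hw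
  have hws : ∀ i ∉ S, w i = 0 := usup hg
  have hik : i ≠ k := fun h => hk (h ▸ hi)
  have hterm : ∀ l, mask Q (insert k S) i l * bv Q S k l
      = (if l = k then Q i k else 0) - mask Q S i l * w l := by
    intro l
    by_cases hlk : l = k
    · subst hlk
      rw [if_pos rfl, mask_pos (Finset.mem_insert_of_mem hi) (Finset.mem_insert_self l S),
        show bv Q S l l = 1 from by rw [bv, if_pos rfl],
        mask_neg (Or.inr hk)]
      ring
    · rw [if_neg hlk, bv, if_neg hlk]
      have h2 : (∑ m, pinv (mask Q S) l m * (-Q m k)) = -w l := by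
        rw [hw]; simp only [mulVec, dotProduct, mul_neg, Finset.sum_neg_distrib]
      rw [h2]
      by_cases hl : l ∈ S
      · rw [mask_pos (Finset.mem_insert_of_mem hi) (Finset.mem_insert_of_mem hl),
          mask_pos hi hl]
        ring
      · rw [mask_neg (Or.inr (by simp [hlk, hl])), mask_neg (Or.inr hl)]
        ring
  rw [Finset.sum_congr rfl fun l _ => hterm l, Finset.sum_sub_distrib,
    Finset.sum_ite_eq' Finset.univ k (fun _ => Q i k), if_pos (Finset.mem_univ k)]
  have h3 : ∑ l, mask Q S i l * w l = (mask Q S *ᵥ w) i := rfl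
  rw [h3, hw, hAu hg]
  simp [hi]

include hoff

lemma construct :
    Good Q (insert k S)
      (pinv (mask Q S) + (gam Q S k)⁻¹ • vecMulVec (bv Q S k) (bv Q S k)) := by
  set P := pinv (mask Q S) with hP
  set v := bv Q S k with hv
  set g := gam Q S k with hgam
  have hgpos : 0 < g := gam_pos hQ hk hg
  have hvnn : ∀ i, 0 ≤ v i := bv_nonneg hQ hoff hk hg
  have hvsup : ∀ i, i ∉ insert k S → v i = 0 := fun i hi => bv_support hQ hg i hi
  refine ⟨?_, ?_, ?_, ?_⟩
  · rw [Matrix.transpose_add, Matrix.transpose_smul, hg.1]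
    congr 1
    ext i j
    simp [vecMulVec_apply, mul_comm]
  · intro i j hi
    have h1 : P i j = 0 := hg.2.1 i j (fun h => hi (Finset.mem_insert_of_mem h))
    have h2 : v i = 0 := hvsup i hi
    simp [h1, h2, vecMulVec_apply]
  · ext i j
    rw [Matrix.mul_apply]
    have hsplit : ∑ l, mask Q (insert k S) i l
          * (P + g⁻¹ • vecMulVec v v) l j
        = (∑ l, mask Q (insert k S) i l * P l j)
          + (g⁻¹ * v j) * ∑ l, mask Q (insert k S) i l * v l := by
      rw [Finset.mul_sum, ← Finset.sum_add_distrib]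
      refine Finset.sum_congr rfl fun l _ => ?_
      simp only [Matrix.add_apply, Matrix.smul_apply, vecMulVec_apply, smul_eq_mul]
      ring
    rw [hsplit]
    by_cases hik : i = k
    · rw [hik, r1 hQ hk hg, r3 hQ hk hg, ← hgam]
      have hcan : g⁻¹ * v j * g = v j := by field_simp
      rw [hcan]
      by_cases hjk : j = k
      · rw [hjk, usup hg k hk, show v k = 1 from by rw [hv, bv, if_pos rfl]]
        simp [Emat, Finset.mem_insert_self]
      · have hvj : v j = -((pinv (mask Q S) *ᵥ fun l => Q l k) j) := by
          rw [hv, bv, if_neg hjk]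
          simp only [mulVec, dotProduct, mul_neg, Finset.sum_neg_distrib]
        rw [hvj, show Emat (insert k S) k j = 0 from by
          simp only [Emat, of_apply]; rw [if_neg (by tauto)]]
        ring
    · by_cases hiS : i ∈ S
      · rw [r2 hg i hiS, r4 hQ hk hg i hiS]
        have : Emat S i j = Emat (insert k S) i j := by
          simp only [Emat, of_apply]
          by_cases hij : i = j
          · subst hij; simp [hiS, Finset.mem_insert_of_mem hiS]
          · simp [hij]
        rw [this]; ring
      · have hiS' : i ∉ insert k S := by simp [hik, hiS]
        rw [show Emat (insert k S) i j = 0 from by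
          simp only [Emat, of_apply]; rw [if_neg (fun h => hiS' h.2)]]
        rw [Finset.sum_eq_zero fun l _ => by rw [mask_neg (Or.inl hiS'), zero_mul],
          Finset.sum_eq_zero fun l _ => by rw [mask_neg (Or.inl hiS'), zero_mul]]
        ring
  · intro i j
    simp only [Matrix.add_apply, Matrix.smul_apply, vecMulVec_apply, smul_eq_mul]
    have := hg.2.2.2 i j
    have := mul_nonneg (mul_nonneg (inv_nonneg.2 hgpos.le) (hvnn i)) (hvnn j)
    nlinarith

end Construct
section Final
variable (hQ : Q.PosDef) (hoff : ∀ i j : Fin n, i ≠ j → Q i j ≤ 0)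
include hQ hoff

lemma good_all (S : Finset (Fin n)) : Good Q S (pinv (mask Q S)) := by
  induction S using Finset.induction_on with
  | empty =>
    have h0 : Good Q ∅ 0 := by
      refine ⟨by simp, fun i j _ => rfl, ?_, fun i j => le_refl 0⟩
      rw [Matrix.mul_zero]
      ext i j
      simp [Emat]
    rw [good_pinv (hQs hQ) h0]
    exact h0
  | @insert a s ha ih =>
    have hc := construct hQ hoff ha ih
    rw [good_pinv (hQs hQ) hc]
    exact hc

lemma pinv_insert {S : Finset (Fin n)} {k : Fin n} (hk : k ∉ S) :
    pinv (mask Q (insert k S))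
      = pinv (mask Q S) + (gam Q S k)⁻¹ • vecMulVec (bv Q S k) (bv Q S k) :=
  good_pinv (hQs hQ) (construct hQ hoff hk (good_all hQ hoff S))

lemma pinv_nonneg (S : Finset (Fin n)) (i j : Fin n) : 0 ≤ pinv (mask Q S) i j :=
  (good_all hQ hoff S).2.2.2 i j

lemma insert_apply {S : Finset (Fin n)} {k : Fin n} (hk : k ∉ S) (i j : Fin n) :
    pinv (mask Q (insert k S)) i j
      = pinv (mask Q S) i j + (gam Q S k)⁻¹ * (bv Q S k i * bv Q S k j) := by
  rw [pinv_insert hQ hoff hk]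
  simp only [Matrix.add_apply, Matrix.smul_apply, vecMulVec_apply, smul_eq_mul]

lemma mono_insert (S : Finset (Fin n)) (k i j : Fin n) :
    pinv (mask Q S) i j ≤ pinv (mask Q (insert k S)) i j := by
  by_cases hk : k ∈ S
  · rw [Finset.insert_eq_self.2 hk]
  · rw [insert_apply hQ hoff hk]
    have h1 := gam_pos hQ hk (good_all hQ hoff S)
    have h2 := bv_nonneg hQ hoff hk (good_all hQ hoff S) i
    have h3 := bv_nonneg hQ hoff hk (good_all hQ hoff S) j
    have h4 := mul_nonneg (inv_nonneg.2 h1.le) (mul_nonneg h2 h3)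
    linarith

lemma mono {S T : Finset (Fin n)} (hST : S ⊆ T) (i j : Fin n) :
    pinv (mask Q S) i j ≤ pinv (mask Q T) i j := by
  have key : ∀ U : Finset (Fin n), pinv (mask Q S) i j ≤ pinv (mask Q (S ∪ U)) i j := by
    intro U
    induction U using Finset.induction_on with
    | empty => rw [Finset.union_empty]
    | @insert a s ha ih =>
      rw [Finset.union_insert]
      exact le_trans ih (mono_insert hQ hoff (S ∪ s) a i j)
  have h := key (T \ S)
  rwa [Finset.union_sdiff_of_subset hST] at h

lemma bv_mono {S T : Finset (Fin n)} {k : Fin n} (hST : S ⊆ T) (hk : k ∉ T) (i : Fin n) :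
    bv Q S k i ≤ bv Q T k i := by
  rw [bv, bv]
  by_cases hik : i = k
  · rw [if_pos hik, if_pos hik]
  · rw [if_neg hik, if_neg hik]
    refine Finset.sum_le_sum fun l _ => ?_
    by_cases hlk : l = k
    · subst hlk
      rw [good_col (good_all hQ hoff S) i l (fun h => hk (hST h)),
        good_col (good_all hQ hoff T) i l hk]
    · exact mul_le_mul_of_nonneg_right (mono hQ hoff hST i l) (neg_nonneg.2 (hoff l k hlk))

lemma gaminv_eq {S : Finset (Fin n)} {k : Fin n} (hk : k ∉ S) :
    (gam Q S k)⁻¹ = pinv (mask Q (insert k S)) k k := by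
  rw [insert_apply hQ hoff hk, (good_all hQ hoff S).2.1 k k hk,
    show bv Q S k k = 1 from by rw [bv, if_pos rfl]]
  ring

lemma key_ineq {S T : Finset (Fin n)} {k : Fin n} (hST : S ⊆ T) (hk : k ∉ T) (i j : Fin n) :
    pinv (mask Q (insert k S)) i j - pinv (mask Q S) i j
      ≤ pinv (mask Q (insert k T)) i j - pinv (mask Q T) i j := by
  have hkS : k ∉ S := fun h => hk (hST h)
  rw [insert_apply hQ hoff hkS, insert_apply hQ hoff hk]
  simp only [add_sub_cancel_left]
  rw [gaminv_eq hQ hoff hkS, gaminv_eq hQ hoff hk]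
  have h1 : pinv (mask Q (insert k S)) k k ≤ pinv (mask Q (insert k T)) k k :=
    mono hQ hoff (Finset.insert_subset_insert k hST) k k
  have hbi := bv_mono hQ hoff hST hk i
  have hbj := bv_mono hQ hoff hST hk j
  have hbiS := bv_nonneg hQ hoff hkS (good_all hQ hoff S) i
  have hbjS := bv_nonneg hQ hoff hkS (good_all hQ hoff S) j
  have hbiT := bv_nonneg hQ hoff hk (good_all hQ hoff T) i
  have hprod : bv Q S k i * bv Q S k j ≤ bv Q T k i * bv Q T k j :=
    mul_le_mul hbi hbj hbjS hbiT
  exact mul_le_mul h1 hprod (mul_nonneg hbiS hbjS)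
    (pinv_nonneg hQ hoff (insert k T) k k)

lemma super (i j : Fin n) : ∀ m : ℕ, ∀ T S : Finset (Fin n), (T \ S).card ≤ m →
    pinv (mask Q S) i j + pinv (mask Q T) i j
      ≤ pinv (mask Q (S ∪ T)) i j + pinv (mask Q (S ∩ T)) i j := by
  intro m
  induction m with
  | zero =>
    intro T S hcard
    have hTS : T ⊆ S := by
      rw [← Finset.sdiff_eq_empty_iff_subset]
      exact Finset.card_eq_zero.1 (le_antisymm hcard (Nat.zero_le _))
    rw [Finset.union_eq_left.2 hTS, Finset.inter_eq_right.2 hTS]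
  | succ m ih =>
    intro T S hcard
    by_cases hTS : T ⊆ S
    · rw [Finset.union_eq_left.2 hTS, Finset.inter_eq_right.2 hTS]
    · obtain ⟨k, hkT, hkS⟩ := Finset.not_subset.1 hTS
      set T' := T.erase k with hT'
      have hkT' : k ∉ T' := Finset.notMem_erase k T
      have hTeq : T = insert k T' := (Finset.insert_erase hkT).symm
      have hcard' : (T' \ S).card ≤ m := by
        have he : T' \ S = (T \ S).erase k := by
          ext x
          simp only [hT', Finset.mem_sdiff, Finset.mem_erase]
          tauto
        have hkin : k ∈ T \ S := Finset.mem_sdiff.2 ⟨hkT, hkS⟩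
        have := Finset.card_erase_of_mem hkin
        rw [he, this]
        omega
      have hsub : T' ⊆ S ∪ T' := Finset.subset_union_right
      have hkST' : k ∉ S ∪ T' := by
        simp only [Finset.mem_union]
        tauto
      have hkey := key_ineq hQ hoff hsub hkST' i j
      have hIH := ih T' S hcard'
      have hU : S ∪ T = insert k (S ∪ T') := by rw [hTeq, Finset.union_insert]
      have hI : S ∩ T = S ∩ T' := by
        ext x
        simp only [Finset.mem_inter, hTeq, Finset.mem_insert]
        constructor
        · rintro ⟨hxS, rfl | hxT'⟩
          · exact absurd hxS hkS
          · exact ⟨hxS, hxT'⟩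
        · rintro ⟨hxS, hxT'⟩
          exact ⟨hxS, Or.inr hxT'⟩
      rw [hU, hI, hTeq]
      linarith

end Final

end Stmt8Aux


/-- for a Stieltjes matrix `Q`, the set function
`θ_{ij}(S) = ((Q ∘ e_S e_Sᵀ)†)_{ij}` is supermodular. -/
theorem stmt8 {n : ℕ} (Q : Matrix (Fin n) (Fin n) ℝ)
    (hQ : Q.PosDef) (hoff : ∀ i j : Fin n, i ≠ j → Q i j ≤ 0)
    (i j : Fin n) (S T : Finset (Fin n)) :
    pinv (mask Q S) i j + pinv (mask Q T) i j ≤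
      pinv (mask Q (S ∪ T)) i j + pinv (mask Q (S ∩ T)) i j :=
  Stmt8Aux.super hQ hoff i j ((T \ S).card) T S (le_refl _)
end
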